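/- Let n ≥ 2, let A be an n×n Robinson similarity matrix, let Δ be an integer with 2 ≤ Δ ≤ n−1, let π be a permutation of [n], and let k = π^{-1}(n). Assume the induction hypothesis: for every (n−1)×(n−1) Robinson similarity matrix A'' and every permutation σ of [n−1], ∑_{{i,j} ∈ E^{Δ−1}_{n−1}} A''_{σ(i)σ(j)} ≥ ∑_{{i,j} ∈ E^{Δ−1}_{n−1}} A''_{ij}. Suppose there exist F ⊆ E^Δ_n and a permutation τ of [n] satisfying: (C1) |F| = Δ; (C2) the values min{π(i), π(j)} over pairs {i,j} ∈ F are pairwise distinct; and (C3) τ(n) = k and E^Δ_n \ F = {{τ(i), τ(j)} : {i,j} ∈ E^{Δ−1}_{n−1}}. Then ∑_{{i,j} ∈ E^Δ_n} A_{π(i)π(j)} ≥ ∑_{{i,j} ∈ E^Δ_n} A_{ij}. -/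
import Mathlib


/-- The set `E^Δ_n = {{i, n - Δ + j} : 1 ≤ i ≤ j ≤ Δ}` of unordered pairs of elements
of `[n] = {1,…,n}`. Since `i ≤ Δ < n - Δ + j` for every such pair, each unordered pair
is represented canonically by the ordered pair whose first coordinate is the smaller
element. -/
def EDeltaPairs (n Δ : ℕ) : Finset (ℕ × ℕ) :=
  ((Finset.Icc 1 Δ ×ˢ Finset.Icc 1 Δ).filter (fun p => p.1 ≤ p.2)).image
    (fun p => (p.1, n - Δ + p.2))

/-- `A` (an `n × n` matrix encoded as a function on `ℕ`, entries relevant on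
`{1,…,n}²`) is a Robinson similarity matrix: symmetric and
`A i k ≤ min (A i j) (A j k)` for all `1 ≤ i ≤ j ≤ k ≤ n`. -/
def RobinsonSimOn (n : ℕ) (A : ℕ → ℕ → ℝ) : Prop :=
  (∀ i j, 1 ≤ i → i ≤ n → 1 ≤ j → j ≤ n → A i j = A j i) ∧
  (∀ i j k, 1 ≤ i → i ≤ j → j ≤ k → k ≤ n → A i k ≤ min (A i j) (A j k))

lemma mem_EDeltaPairs' {n Δ : ℕ} {q : ℕ × ℕ} :
    q ∈ EDeltaPairs n Δ ↔ ∃ a b, 1 ≤ a ∧ a ≤ b ∧ b ≤ Δ ∧ q = (a, n - Δ + b) := by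
  simp only [EDeltaPairs, Finset.mem_image, Finset.mem_filter, Finset.mem_product,
    Finset.mem_Icc, Prod.exists]
  constructor
  · rintro ⟨a, b, ⟨⟨⟨h1, h2⟩, h3, h4⟩, h5⟩, rfl⟩
    exact ⟨a, b, h1, h5, h4, rfl⟩
  · rintro ⟨a, b, h1, h2, h3, rfl⟩
    exact ⟨a, b, ⟨⟨⟨h1, h2.trans h3⟩, h1.trans h2, h3⟩, h2⟩, rfl⟩

lemma perm_mem' {π : Equiv.Perm ℕ} {s : Finset ℕ} (hπ : ∀ i, i ∉ s → π i = i)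
    {i : ℕ} (hi : i ∈ s) : π i ∈ s := by
  by_contra h
  have h2 : π i = i := π.injective (hπ _ h)
  rw [h2] at h; exact h hi

lemma sum_Icc_le_sum_of_card' {n : ℕ} (g : ℕ → ℝ)
    (hg : ∀ i j, 1 ≤ i → i ≤ j → j ≤ n → g i ≤ g j) :
    ∀ (k : ℕ) (S : Finset ℕ), S ⊆ Finset.Icc 1 n → S.card = k →
      ∑ a ∈ Finset.Icc 1 k, g a ≤ ∑ s ∈ S, g s := by
  intro k
  induction k with
  | zero => intro S hS hc; simp [Finset.card_eq_zero.mp hc]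
  | succ k ih =>
    intro S hS hc
    have hne : S.Nonempty := Finset.card_pos.mp (by omega)
    set M := S.max' hne with hM
    have hMS : M ∈ S := S.max'_mem hne
    have hMn : M ≤ n := (Finset.mem_Icc.mp (hS hMS)).2
    have hsub : S ⊆ Finset.Icc 1 M := by
      intro s hs
      exact Finset.mem_Icc.mpr ⟨(Finset.mem_Icc.mp (hS hs)).1, S.le_max' s hs⟩
    have hcard : k + 1 ≤ M := by
      have h := Finset.card_le_card hsub
      rw [Nat.card_Icc, hc] at h; omega
    have h1 : ∑ a ∈ Finset.Icc 1 (k+1), g a = ∑ a ∈ Finset.Icc 1 k, g a + g (k+1) := by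
      rw [← Finset.sum_Icc_succ_top (by omega)]
    have h2 : ∑ s ∈ S, g s = ∑ s ∈ S.erase M, g s + g M :=
      (Finset.sum_erase_add S g hMS).symm
    have h3 := ih (S.erase M) (fun s hs => hS (Finset.mem_of_mem_erase hs))
      (by rw [Finset.card_erase_of_mem hMS, hc]; omega)
    have h4 : g (k+1) ≤ g M := hg _ _ (by omega) hcard hMn
    rw [h1, h2]; linarith

/-- Claim 1: let `2 ≤ n`, let `A` be an `n × n` Robinson similarity,
`2 ≤ Δ ≤ n - 1`, let `π` be a permutation of `[n]` and `k = π⁻¹ n`. Assume the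
induction hypothesis for `(n-1) × (n-1)` Robinson similarities on `E^{Δ-1}_{n-1}`.
If there exist `F ⊆ E^Δ_n` and a permutation `τ` of `[n]` satisfying (C1) `|F| = Δ`,
(C2) the values `min (π i) (π j)`, `{i,j} ∈ F`, are pairwise distinct, and (C3)
`τ n = k` and `E^Δ_n \ F = τ(E^{Δ-1}_{n-1})`, then
`∑_{{i,j} ∈ E^Δ_n} A (π i) (π j) ≥ ∑_{{i,j} ∈ E^Δ_n} A i j`. -/
theorem claim1_sum_ge {n Δ : ℕ} (hn : 2 ≤ n)
    (A : ℕ → ℕ → ℝ) (hA : RobinsonSimOn n A)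
    (hΔ1 : 2 ≤ Δ) (hΔ2 : Δ ≤ n - 1)
    (π : Equiv.Perm ℕ) (hπ : ∀ i, i ∉ Finset.Icc 1 n → π i = i)
    (IH : ∀ A'' : ℕ → ℕ → ℝ, RobinsonSimOn (n - 1) A'' →
      ∀ σ : Equiv.Perm ℕ, (∀ i, i ∉ Finset.Icc 1 (n - 1) → σ i = i) →
        ∑ p ∈ EDeltaPairs (n - 1) (Δ - 1), A'' (σ p.1) (σ p.2)
          ≥ ∑ p ∈ EDeltaPairs (n - 1) (Δ - 1), A'' p.1 p.2)
    (F : Finset (ℕ × ℕ)) (hF : F ⊆ EDeltaPairs n Δ)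
    (τ : Equiv.Perm ℕ) (hτ : ∀ i, i ∉ Finset.Icc 1 n → τ i = i)
    (hC1 : F.card = Δ)
    (hC2 : Set.InjOn (fun p : ℕ × ℕ => min (π p.1) (π p.2)) ↑F)
    (hC3a : τ n = π.symm n)
    (hC3b : EDeltaPairs n Δ \ F = (EDeltaPairs (n - 1) (Δ - 1)).image
      (fun p => (min (τ p.1) (τ p.2), max (τ p.1) (τ p.2)))) :
    ∑ p ∈ EDeltaPairs n Δ, A (π p.1) (π p.2) ≥ ∑ p ∈ EDeltaPairs n Δ, A p.1 p.2 := by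
  obtain ⟨hsym, hrob⟩ := hA
  set E := EDeltaPairs n Δ with hEdef
  set E' := EDeltaPairs (n - 1) (Δ - 1) with hE'def
  set T := (Finset.Icc 1 Δ).image (fun a => (a, n)) with hTdef
  set f := (fun p : ℕ × ℕ => (min (τ p.1) (τ p.2), max (τ p.1) (τ p.2))) with hfdef
  -- basic bounds for members of E and E'
  have hmemE : ∀ q ∈ E, 1 ≤ q.1 ∧ q.1 ≤ q.2 ∧ q.2 ≤ n := by
    intro q hq
    obtain ⟨a, b, h1, h2, h3, rfl⟩ := mem_EDeltaPairs'.mp hq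
    refine ⟨h1, ?_, ?_⟩ <;> simp <;> omega
  have hmemE' : ∀ q ∈ E', 1 ≤ q.1 ∧ q.1 ≤ q.2 ∧ q.2 ≤ n - 1 := by
    intro q hq
    obtain ⟨a, b, h1, h2, h3, rfl⟩ := mem_EDeltaPairs'.mp hq
    refine ⟨h1, ?_, ?_⟩ <;> simp <;> omega
  -- decomposition E = E' ∪ T, disjoint
  have hunion : E = E' ∪ T := by
    ext q
    rw [Finset.mem_union, hEdef, hE'def, hTdef, mem_EDeltaPairs', mem_EDeltaPairs']
    simp only [Finset.mem_image, Finset.mem_Icc]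
    constructor
    · rintro ⟨a, b, h1, h2, h3, rfl⟩
      by_cases hb : b = Δ
      · right; exact ⟨a, ⟨h1, by omega⟩, by rw [Prod.ext_iff]; constructor <;> simp <;> omega⟩
      · left; exact ⟨a, b, h1, h2, by omega, by rw [Prod.ext_iff]; constructor <;> simp <;> omega⟩
    · rintro (⟨a, b, h1, h2, h3, rfl⟩ | ⟨a, ⟨h1, h2⟩, rfl⟩)
      · exact ⟨a, b, h1, h2, by omega, by rw [Prod.ext_iff]; constructor <;> simp <;> omega⟩
      · exact ⟨a, Δ, h1, h2, le_rfl, by rw [Prod.ext_iff]; constructor <;> simp <;> omega⟩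
  have hdisj : Disjoint E' T := by
    rw [Finset.disjoint_left]
    rintro q hq hqT
    obtain ⟨a, b, h1, h2, h3, rfl⟩ := mem_EDeltaPairs'.mp hq
    obtain ⟨c, hc, hceq⟩ := Finset.mem_image.mp hqT
    have h4 := (Prod.ext_iff.mp hceq).2
    simp only at h4
    omega
  have hTcard : T.card = Δ := by
    rw [hTdef, Finset.card_image_of_injective _ (fun a b h => (Prod.ext_iff.mp h).1),
      Nat.card_Icc]; omega
  have hEcard : E.card = E'.card + Δ := by
    rw [hunion, Finset.card_union_of_disjoint hdisj, hTcard]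
  -- f is injective on E'
  have himg : E \ F = E'.image f := hC3b
  have hinj : Set.InjOn f ↑E' := by
    apply Finset.injOn_of_card_image_eq
    rw [← himg, Finset.card_sdiff_of_subset hF, hEcard, hC1]; omega
  -- permutations map [1,n] into itself
  have hπmem : ∀ {i}, i ∈ Finset.Icc 1 n → π i ∈ Finset.Icc 1 n := fun h => perm_mem' hπ h
  have hτmem : ∀ {i}, i ∈ Finset.Icc 1 n → τ i ∈ Finset.Icc 1 n := fun h => perm_mem' hτ h
  -- Part 1 : sum over E \ F
  set σ := τ.trans π with hσdef
  have hσ : ∀ x, σ x = π (τ x) := fun x => rfl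
  have hσfix : ∀ i, i ∉ Finset.Icc 1 (n - 1) → σ i = i := by
    intro i hi
    by_cases h : i ∈ Finset.Icc 1 n
    · have hin : i = n := by
        rw [Finset.mem_Icc] at h; rw [Finset.mem_Icc] at hi; omega
      subst hin
      rw [hσ, hC3a, Equiv.apply_symm_apply]
    · rw [hσ, hτ i h, hπ i h]
  have hA' : RobinsonSimOn (n - 1) A :=
    ⟨fun i j h1 h2 h3 h4 => hsym i j h1 (h2.trans (Nat.sub_le n 1)) h3 (h4.trans (Nat.sub_le n 1)),
     fun i j k h1 h2 h3 h4 => hrob i j k h1 h2 h3 (h4.trans (Nat.sub_le n 1))⟩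
  have hIH := IH A hA' σ hσfix
  have hterm : ∀ p ∈ E', A (π (f p).1) (π (f p).2) = A (σ p.1) (σ p.2) := by
    intro p hp
    obtain ⟨hp1, hp12, hp2⟩ := hmemE' p hp
    have h1 : τ p.1 ∈ Finset.Icc 1 n := hτmem (Finset.mem_Icc.mpr ⟨hp1, by omega⟩)
    have h2 : τ p.2 ∈ Finset.Icc 1 n := hτmem (Finset.mem_Icc.mpr ⟨by omega, by omega⟩)
    have h1' := hπmem h1
    have h2' := hπmem h2
    rw [Finset.mem_Icc] at h1' h2'
    rcases le_total (τ p.1) (τ p.2) with h | h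
    · rw [hfdef]; simp only [min_eq_left h, max_eq_right h]; rw [hσ, hσ]
    · rw [hfdef]; simp only [min_eq_right h, max_eq_left h]; rw [hσ, hσ]
      exact hsym _ _ h2'.1 h2'.2 h1'.1 h1'.2
  have hpart1 : ∑ p ∈ E \ F, A (π p.1) (π p.2) ≥ ∑ p ∈ E', A p.1 p.2 := by
    rw [himg, Finset.sum_image (fun x hx y hy h =>
      hinj (Finset.mem_coe.mpr hx) (Finset.mem_coe.mpr hy) h)]
    calc ∑ p ∈ E', A (π (f p).1) (π (f p).2)
        = ∑ p ∈ E', A (σ p.1) (σ p.2) := Finset.sum_congr rfl hterm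
      _ ≥ ∑ p ∈ E', A p.1 p.2 := hIH
  -- Part 2 : sum over F
  set g := (fun p : ℕ × ℕ => min (π p.1) (π p.2)) with hgdef
  set S := F.image g with hSdef
  have hSsub : S ⊆ Finset.Icc 1 n := by
    intro s hs
    obtain ⟨p, hp, rfl⟩ := Finset.mem_image.mp hs
    obtain ⟨h1, h2, h3⟩ := hmemE p (hF hp)
    have hx := hπmem (Finset.mem_Icc.mpr ⟨h1, by omega⟩)
    have hy := hπmem (Finset.mem_Icc.mpr ⟨by omega, h3⟩)
    rw [Finset.mem_Icc] at hx hy ⊢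
    constructor
    · exact le_min hx.1 hy.1
    · exact (min_le_left _ _).trans hx.2
  have hScard : S.card = Δ := by
    rw [hSdef, Finset.card_image_of_injOn hC2, hC1]
  have hmono := sum_Icc_le_sum_of_card' (fun s => A s n)
    (fun i j h1 h2 h3 => (hrob i j n h1 h2 h3 le_rfl).trans (min_le_right _ _))
    Δ S hSsub hScard
  have hstep : ∀ p ∈ F, A (g p) n ≤ A (π p.1) (π p.2) := by
    intro p hp
    obtain ⟨h1, h2, h3⟩ := hmemE p (hF hp)
    have hx := hπmem (Finset.mem_Icc.mpr ⟨h1, by omega⟩)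
    have hy := hπmem (Finset.mem_Icc.mpr ⟨by omega, h3⟩)
    rw [Finset.mem_Icc] at hx hy
    rcases le_total (π p.1) (π p.2) with h | h
    · rw [hgdef]; simp only [min_eq_left h]
      exact (hrob (π p.1) (π p.2) n hx.1 h hy.2 le_rfl).trans (min_le_left _ _)
    · rw [hgdef]; simp only [min_eq_right h]
      have hle : A (π p.2) n ≤ A (π p.2) (π p.1) :=
        (hrob (π p.2) (π p.1) n hy.1 h hx.2 le_rfl).trans (min_le_left _ _)
      rw [hsym (π p.2) (π p.1) hy.1 hy.2 hx.1 hx.2] at hle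
      exact hle
  have hpart2 : ∑ p ∈ F, A (π p.1) (π p.2) ≥ ∑ a ∈ Finset.Icc 1 Δ, A a n := by
    calc ∑ p ∈ F, A (π p.1) (π p.2)
        ≥ ∑ p ∈ F, A (g p) n := Finset.sum_le_sum hstep
      _ = ∑ s ∈ S, A s n := by
            rw [hSdef, Finset.sum_image (fun x hx y hy h =>
              hC2 (Finset.mem_coe.mpr hx) (Finset.mem_coe.mpr hy) h)]
      _ ≥ ∑ a ∈ Finset.Icc 1 Δ, A a n := hmono
  -- assemble
  have hsplitL : ∑ p ∈ E \ F, A (π p.1) (π p.2) + ∑ p ∈ F, A (π p.1) (π p.2)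
      = ∑ p ∈ E, A (π p.1) (π p.2) := Finset.sum_sdiff hF
  have hsplitR : ∑ p ∈ E, A p.1 p.2
      = ∑ p ∈ E', A p.1 p.2 + ∑ a ∈ Finset.Icc 1 Δ, A a n := by
    rw [hunion, Finset.sum_union hdisj, hTdef,
      Finset.sum_image (fun x _ y _ h => (Prod.ext_iff.mp h).1)]
  rw [ge_iff_le, hsplitR, ← hsplitL]
  exact add_le_add hpart1 hpart2
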